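/- arXiv:0807.2547 — 3 statements merged into one kernel-verified Lean document; each statement's English description precedes it below -/
import Mathlib

section
/- For any a ∈ (0,1) and any u ∈ [a,1], one has (1/u - 1)^2 ≤ (2/a) φ(u), where φ(u) = log u + 1/u - 1. -/
lemma hasDerivAt_g (x : ℝ) (hx0 : 0 < x) :
    HasDerivAt (fun x : ℝ => 2 * x * Real.log x - x ^ 2 + 1)
      (2 * Real.log x + 2 - 2 * x) x := by
  have h1 : HasDerivAt (fun x : ℝ => 2 * x * Real.log x)
      (2 * Real.log x + 2) x := by
    have := ((hasDerivAt_id x).const_mul (2:ℝ)).mul (Real.hasDerivAt_log hx0.ne')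
    convert this using 1
    · rfl
    · rfl
    · rfl
    · simp [hx0.ne']
  have h2 : HasDerivAt (fun x : ℝ => x ^ 2) (2 * x) x := by
    simpa using hasDerivAt_pow 2 x
  simpa using (h1.sub h2).add_const 1

lemma key_log_ineq (u : ℝ) (hu0 : 0 < u) (hu1 : u ≤ 1) :
    u ^ 2 - 1 ≤ 2 * u * Real.log u := by
  set g : ℝ → ℝ := fun x => 2 * x * Real.log x - x ^ 2 + 1 with hg
  have hanti : AntitoneOn g (Set.Icc u 1) := by
    apply antitoneOn_of_deriv_nonpos (convex_Icc u 1)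
    ·
      apply ContinuousOn.add
      · apply ContinuousOn.sub
        · exact ContinuousOn.mul (by fun_prop) (Real.continuousOn_log.mono (by
            intro x hx
            have : 0 < x := lt_of_lt_of_le hu0 hx.1
            simp [this.ne']))
        · fun_prop
      · fun_prop
    · intro x hx
      rw [interior_Icc] at hx
      have hx0 : 0 < x := lt_of_lt_of_le hu0 hx.1.le
      exact (hasDerivAt_g x hx0).differentiableAt.differentiableWithinAt
    · intro x hx
      rw [interior_Icc] at hx
      have hx0 : 0 < x := lt_of_lt_of_le hu0 hx.1.le
      rw [(hasDerivAt_g x hx0).deriv]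
      have hlog : Real.log x ≤ x - 1 := Real.log_le_sub_one_of_pos hx0
      linarith
  have h1mem : (1:ℝ) ∈ Set.Icc u 1 := ⟨hu1, le_rfl⟩
  have humem : u ∈ Set.Icc u 1 := ⟨le_rfl, hu1⟩
  have := hanti humem h1mem hu1
  simp [hg] at this
  linarith

theorem stmt_1 (a u : ℝ) (ha0 : 0 < a) (ha1 : a < 1) (hau : a ≤ u) (hu1 : u ≤ 1) :
    (1 / u - 1) ^ 2 ≤ (2 / a) * (Real.log u + 1 / u - 1) := by
  have hu0 : 0 < u := lt_of_lt_of_le ha0 hau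
  have hkey := key_log_ineq u hu0 hu1
  have hphi : 0 ≤ Real.log u + 1 / u - 1 := by
    have := Real.log_le_sub_one_of_pos (show (0:ℝ) < 1 / u by positivity)
    rw [Real.log_div one_ne_zero hu0.ne', Real.log_one] at this
    linarith
  have h1 : (1 / u - 1) ^ 2 ≤ (2 / u) * (Real.log u + 1 / u - 1) := by
    have e1 : (1 / u - 1) ^ 2 = (1 - u) ^ 2 / u ^ 2 := by
      field_simp
    have e2 : (2 / u) * (Real.log u + 1 / u - 1)
        = (2 * u * Real.log u + 2 - 2 * u) / u ^ 2 := by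
      field_simp
    rw [e1, e2]
    apply div_le_div_of_nonneg_right ?_ (by positivity)
    nlinarith
  have h2 : (2 / u) * (Real.log u + 1 / u - 1)
      ≤ (2 / a) * (Real.log u + 1 / u - 1) := by
    apply mul_le_mul_of_nonneg_right ?_ hphi
    apply div_le_div_of_nonneg_left (by norm_num) ha0 hau
  linarith
end

section
/- Let s, σ ∈ ℝⁿ with σ_i > 0, let S ⊂ ℝⁿ be a linear subspace with orthogonal projection π, let p be a partition of {1,…,n}, and let Σ_p be the space of vectors constant on each block of p. Suppose S is compatible with p in the sense that π maps vectors supported on each block I ∈ p to vectors supported on I. Define s_m = πs and σ_m constant on each block I with value σ_{m,I} = (1/|I|)·Σ_{i∈I}[(s_i - s_{m,i})² + σ_i]. Then (s_m, σ_m) minimizes (t,τ) ↦ KL(P_{s,σ}, P_{t,τ}) over S × Σ_p, and the minimum equals (1/2)·Σ_{I∈p} Σ_{i∈I} log(σ_{m,I}/σ_i). -/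
open Finset

private def restr {n : ℕ} {ι : Type*} [DecidableEq ι] (blk : Fin n → ι)
    (y : Fin n → ℝ) (j : ι) : Fin n → ℝ :=
  fun i => if blk i = j then y i else 0

/-- Statement: the pair `(π s, σ_m)` minimizes the Kullback-Leibler divergence
`(t, τ) ↦ KL(P_{s,σ}, P_{t,τ})` over `S × Σ_p` and the minimum value is
`(1/2) ∑_i log (σ_{m,I(i)} / σ_i)`. -/
theorem stmt_15 {n : ℕ} {ι : Type*} [Fintype ι] [DecidableEq ι]
    (blk : Fin n → ι) (S : Submodule ℝ (Fin n → ℝ))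
    (π : (Fin n → ℝ) →ₗ[ℝ] (Fin n → ℝ))
    (hπ_range : ∀ x, π x ∈ S)
    (hπ_fix : ∀ y ∈ S, π y = y)
    (hπ_orth : ∀ x, ∀ y ∈ S, ∑ i, (x i - π x i) * y i = 0)
    (hcompat : ∀ (j : ι) (x : Fin n → ℝ),
      (∀ i, blk i ≠ j → x i = 0) → ∀ i, blk i ≠ j → π x i = 0)
    (s σ : Fin n → ℝ) (hσ : ∀ i, 0 < σ i)
    (kl : (Fin n → ℝ) → (Fin n → ℝ) → ℝ)
    (hkl : ∀ t τ, kl t τ = (1 / 2) * ∑ i, ((s i - t i) ^ 2 / τ i +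
      (Real.log (τ i / σ i) + 1 / (τ i / σ i) - 1)))
    (σm : Fin n → ℝ)
    (hσm : ∀ i, σm i = (∑ j ∈ univ.filter fun j => blk j = blk i,
      ((s j - π s j) ^ 2 + σ j)) / (univ.filter fun j => blk j = blk i).card) :
    (∀ t τ, t ∈ S → (∀ i, 0 < τ i) → (∀ i j, blk i = blk j → τ i = τ j) →
        kl (π s) σm ≤ kl t τ) ∧
      kl (π s) σm = (1 / 2) * ∑ i, Real.log (σm i / σ i) := by
  classical
  have hfib_self : ∀ i : Fin n, i ∈ univ.filter fun j => blk j = blk i := fun i => by simp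
  have hcard_pos : ∀ i : Fin n, 0 < ((univ.filter fun j => blk j = blk i).card : ℝ) := by
    intro i
    exact_mod_cast Finset.card_pos.2 ⟨i, hfib_self i⟩
  have hσm_pos : ∀ i, 0 < σm i := by
    intro i
    rw [hσm i]
    apply div_pos _ (hcard_pos i)
    refine Finset.sum_pos (fun j _ => ?_) ⟨i, hfib_self i⟩
    have := hσ j
    positivity
  have hσm_const : ∀ i j, blk i = blk j → σm i = σm j := by
    intro i j h
    rw [hσm i, hσm j, h]
  have hσm_mul : ∀ i, (∑ j ∈ univ.filter (fun j => blk j = blk i), ((s j - π s j) ^ 2 + σ j))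
      = σm i * (univ.filter fun j => blk j = blk i).card := by
    intro i
    rw [hσm i, div_mul_cancel₀]
    exact (hcard_pos i).ne'
  -- restriction to a block stays in S
  have hrestr_supp : ∀ (y : Fin n → ℝ) (j : ι) (i : Fin n), blk i ≠ j → restr blk y j i = 0 := by
    intro y j i h; simp [restr, h]
  have hsum_restr : ∀ y : Fin n → ℝ, ∑ j : ι, restr blk y j = y := by
    intro y; funext i
    simp [restr, Finset.sum_apply, Finset.sum_ite_eq]
  have hπ_restr : ∀ y ∈ S, ∀ j, π (restr blk y j) = restr blk y j := by
    intro y hy j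
    funext i
    by_cases h : blk i = j
    · have h1 : π y i = y i := by rw [hπ_fix y hy]
      have h3 : π y i = ∑ j' : ι, π (restr blk y j') i := by
        conv_lhs => rw [← hsum_restr y, map_sum]
        simp [Finset.sum_apply]
      have h4 : ∑ j' : ι, π (restr blk y j') i = π (restr blk y j) i := by
        refine Finset.sum_eq_single_of_mem j (mem_univ j) ?_
        intro j' _ hne
        exact hcompat j' (restr blk y j') (hrestr_supp y j') i (by rw [h]; exact hne.symm)
      calc π (restr blk y j) i = ∑ j' : ι, π (restr blk y j') i := h4.symm
        _ = π y i := h3.symm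
        _ = y i := h1
        _ = restr blk y j i := by simp [restr, h]
    · rw [hcompat j (restr blk y j) (hrestr_supp y j) i h, hrestr_supp y j i h]
  have hrestr_mem : ∀ y ∈ S, ∀ j, restr blk y j ∈ S := by
    intro y hy j
    rw [← hπ_restr y hy j]
    exact hπ_range _
  -- orthogonality on each fiber
  have horth_fib : ∀ y ∈ S, ∀ j : ι,
      ∑ i ∈ univ.filter (fun i => blk i = j), (s i - π s i) * y i = 0 := by
    intro y hy j
    have h := hπ_orth s (restr blk y j) (hrestr_mem y hy j)
    rw [Finset.sum_filter]
    calc ∑ i, (if blk i = j then (s i - π s i) * y i else 0)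
        = ∑ i, (s i - π s i) * restr blk y j i := by
          refine Finset.sum_congr rfl fun i _ => ?_
          by_cases hb : blk i = j <;> simp [restr, hb]
      _ = 0 := h
  -- weighted orthogonality for block-constant weights
  have horth_w : ∀ (τ : Fin n → ℝ), (∀ i j, blk i = blk j → τ i = τ j) →
      ∀ y ∈ S, ∑ i, (s i - π s i) * y i / τ i = 0 := by
    intro τ hτ y hy
    rw [← Finset.sum_fiberwise univ blk (fun i => (s i - π s i) * y i / τ i)]
    refine Finset.sum_eq_zero fun j _ => ?_
    rcases Finset.eq_empty_or_nonempty (univ.filter fun i => blk i = j) with he | ⟨i0, hi0⟩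
    · rw [he, Finset.sum_empty]
    · have hbi0 : blk i0 = j := (Finset.mem_filter.1 hi0).2
      have hco : ∀ i ∈ univ.filter (fun i => blk i = j),
          (s i - π s i) * y i / τ i = (s i - π s i) * y i * (τ i0)⁻¹ := by
        intro i hi
        rw [hτ i i0 (by rw [(Finset.mem_filter.1 hi).2, hbi0]), div_eq_mul_inv]
      rw [Finset.sum_congr rfl hco, ← Finset.sum_mul, horth_fib y hy j, zero_mul]
  -- grouping: replace (u² + σ) by σm under block-constant denominators
  have hgroup : ∀ (τ : Fin n → ℝ), (∀ i j, blk i = blk j → τ i = τ j) →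
      ∑ i, ((s i - π s i) ^ 2 + σ i) / τ i = ∑ i, σm i / τ i := by
    intro τ hτ
    rw [← Finset.sum_fiberwise univ blk (fun i => ((s i - π s i) ^ 2 + σ i) / τ i),
        ← Finset.sum_fiberwise univ blk (fun i => σm i / τ i)]
    refine Finset.sum_congr rfl fun j _ => ?_
    rcases Finset.eq_empty_or_nonempty (univ.filter fun i => blk i = j) with he | ⟨i0, hi0⟩
    · rw [he, Finset.sum_empty, Finset.sum_empty]
    · have hbi0 : blk i0 = j := (Finset.mem_filter.1 hi0).2
      subst hbi0
      have hLHS : ∑ i ∈ univ.filter (fun i => blk i = blk i0), ((s i - π s i) ^ 2 + σ i) / τ i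
          = (∑ i ∈ univ.filter (fun i => blk i = blk i0), ((s i - π s i) ^ 2 + σ i)) / τ i0 := by
        rw [Finset.sum_div]
        refine Finset.sum_congr rfl fun i hi => ?_
        rw [hτ i i0 (Finset.mem_filter.1 hi).2]
      have hRHS : ∑ i ∈ univ.filter (fun i => blk i = blk i0), σm i / τ i
          = ((univ.filter (fun i => blk i = blk i0)).card : ℝ) * (σm i0 / τ i0) := by
        rw [Finset.sum_congr rfl (fun i hi => ?_), Finset.sum_const, nsmul_eq_mul]
        rw [hτ i i0 (Finset.mem_filter.1 hi).2, hσm_const i i0 (Finset.mem_filter.1 hi).2]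
      rw [hLHS, hRHS, hσm_mul i0]
      ring
  -- pointwise inequality
  have hpt : ∀ (τ : Fin n → ℝ), (∀ i, 0 < τ i) → ∀ i,
      Real.log (σm i / σ i) ≤ σm i / τ i + Real.log (τ i / σ i) - 1 := by
    intro τ hτpos i
    have h1 : Real.log (σm i / τ i) ≤ σm i / τ i - 1 :=
      Real.log_le_sub_one_of_pos (div_pos (hσm_pos i) (hτpos i))
    have h2 : Real.log (σm i / σ i) = Real.log (σm i / τ i) + Real.log (τ i / σ i) := by
      rw [← Real.log_mul (div_pos (hσm_pos i) (hτpos i)).ne'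
        (div_pos (hτpos i) (hσ i)).ne']
      congr 1
      have hτ' := (hτpos i).ne'
      have hσ' := (hσ i).ne'
      field_simp
    linarith
  -- the value at the minimizer
  have heq : kl (π s) σm = (1 / 2) * ∑ i, Real.log (σm i / σ i) := by
    rw [hkl]
    have h1 : ∀ i : Fin n,
        (s i - π s i) ^ 2 / σm i + (Real.log (σm i / σ i) + 1 / (σm i / σ i) - 1)
        = ((s i - π s i) ^ 2 + σ i) / σm i + (Real.log (σm i / σ i) - 1) := by
      intro i
      have hσ' := (hσ i).ne'
      have hσm' := (hσm_pos i).ne'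
      field_simp
      ring
    rw [Finset.sum_congr rfl fun i _ => h1 i, Finset.sum_add_distrib,
      hgroup σm hσm_const]
    have h3 : ∑ i : Fin n, σm i / σm i = (n : ℝ) := by
      rw [Finset.sum_congr rfl fun i _ => div_self (hσm_pos i).ne']
      simp
    rw [h3, Finset.sum_sub_distrib]
    simp
  refine ⟨?_, heq⟩
  intro t τ ht hτpos hτconst
  rw [heq, hkl t τ]
  -- step A: projection minimizes the weighted quadratic part
  have hv : (fun i => π s i - t i) ∈ S := S.sub_mem (hπ_range s) ht
  have hA : ∑ i, (s i - π s i) ^ 2 / τ i ≤ ∑ i, (s i - t i) ^ 2 / τ i := by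
    have hexp : ∀ i, (s i - t i) ^ 2 / τ i
        = (s i - π s i) ^ 2 / τ i + (2 * ((s i - π s i) * (π s i - t i) / τ i)
          + (π s i - t i) ^ 2 / τ i) := by
      intro i
      have hτ' := (hτpos i).ne'
      field_simp
      ring
    rw [Finset.sum_congr rfl fun i _ => hexp i, Finset.sum_add_distrib,
      Finset.sum_add_distrib, ← Finset.mul_sum,
      horth_w τ hτconst (fun i => π s i - t i) hv, mul_zero, zero_add]
    have hnn : 0 ≤ ∑ i, (π s i - t i) ^ 2 / τ i :=
      Finset.sum_nonneg fun i _ => div_nonneg (sq_nonneg _) (hτpos i).le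
    linarith
  -- main sum inequality
  have hmain : ∑ i, Real.log (σm i / σ i) ≤
      ∑ i, ((s i - t i) ^ 2 / τ i + (Real.log (τ i / σ i) + 1 / (τ i / σ i) - 1)) := by
    have hform : ∀ i : Fin n,
        (s i - t i) ^ 2 / τ i + (Real.log (τ i / σ i) + 1 / (τ i / σ i) - 1)
        = ((s i - t i) ^ 2 / τ i - (s i - π s i) ^ 2 / τ i)
          + (((s i - π s i) ^ 2 + σ i) / τ i + (Real.log (τ i / σ i) - 1)) := by
      intro i
      have hτ' := (hτpos i).ne'
      have hσ' := (hσ i).ne'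
      field_simp
      ring
    rw [Finset.sum_congr rfl fun i _ => hform i, Finset.sum_add_distrib]
    have hA' : 0 ≤ ∑ i, ((s i - t i) ^ 2 / τ i - (s i - π s i) ^ 2 / τ i) := by
      rw [Finset.sum_sub_distrib]
      linarith
    have hB : ∑ i, Real.log (σm i / σ i)
        ≤ ∑ i, (((s i - π s i) ^ 2 + σ i) / τ i + (Real.log (τ i / σ i) - 1)) := by
      rw [Finset.sum_add_distrib, hgroup τ hτconst, ← Finset.sum_add_distrib]
      refine Finset.sum_le_sum fun i _ => ?_
      have := hpt τ hτpos i
      linarith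
    linarith
  linarith
end

section
/- Let f : [0,1] → ℝ be α-Hölderian with constant L (|f(x)-f(y)| ≤ L|x-y|^α for all x,y), let n ≥ 1, define s ∈ ℝⁿ by s_i = f(i/n), and let p be a regular partition of {1,…,n} into D blocks of equal size (D divides n). Let s̄ ∈ ℝⁿ be the vector equal on each block I of p to the mean (1/|I|)Σ_{i∈I} s_i. Then ‖s - s̄‖² ≤ n L² D^{-2α}. -/
open Finset

theorem stmt_16 (α L : ℝ) (hα0 : 0 < α) (hα1 : α ≤ 1) (hL : 0 < L)
    (f : ℝ → ℝ)
    (hf : ∀ x ∈ Set.Icc (0 : ℝ) 1, ∀ y ∈ Set.Icc (0 : ℝ) 1, |f x - f y| ≤ L * |x - y| ^ α)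
    (n D : ℕ) (hn : 0 < n) (hD : 0 < D) (hdvd : D ∣ n)
    (s : Fin n → ℝ) (hs : ∀ i : Fin n, s i = f (((i : ℕ) + 1) / n))
    (sbar : Fin n → ℝ)
    (hsbar : ∀ i : Fin n, sbar i =
      (∑ j ∈ univ.filter fun j : Fin n => (j : ℕ) / (n / D) = (i : ℕ) / (n / D), s j) /
        (univ.filter fun j : Fin n => (j : ℕ) / (n / D) = (i : ℕ) / (n / D)).card) :
    ∑ i, (s i - sbar i) ^ 2 ≤ n * L ^ 2 * (D : ℝ) ^ (-(2 * α)) := by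
  set m := n / D with hm'
  have hm : 0 < m := Nat.div_pos (Nat.le_of_dvd hn hdvd) hD
  have hnm : m * D = n := Nat.div_mul_cancel hdvd
  set d : ℝ := (D : ℝ) ^ (-α) with hd
  have hD0 : (0 : ℝ) < D := by exact_mod_cast hD
  have hn0 : (0 : ℝ) < n := by exact_mod_cast hn
  have hd0 : 0 ≤ d := Real.rpow_nonneg (le_of_lt hD0) _
  have key : ∀ i : Fin n, |s i - sbar i| ≤ L * d := by
    intro i
    set B := univ.filter (fun j : Fin n => (j : ℕ) / m = (i : ℕ) / m) with hB
    have hiB : i ∈ B := by simp [hB]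
    have hcardpos : 0 < B.card := card_pos.mpr ⟨i, hiB⟩
    have hcard : (0 : ℝ) < (B.card : ℝ) := by exact_mod_cast hcardpos
    have pair : ∀ j ∈ B, |s i - s j| ≤ L * d := by
      intro j hj
      have hj' : (j : ℕ) / m = (i : ℕ) / m := by simpa [hB] using hj
      have hxmem : ∀ k : Fin n, (((k : ℕ) : ℝ) + 1) / n ∈ Set.Icc (0 : ℝ) 1 := by
        intro k
        constructor
        · positivity
        · rw [div_le_one hn0]
          have : (k : ℕ) + 1 ≤ n := k.2
          exact_mod_cast this
      rw [hs i, hs j]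
      have hdist : |(((i : ℕ) : ℝ) + 1) / n - (((j : ℕ) : ℝ) + 1) / n| ≤ 1 / D := by
        have hi1 : (i : ℕ) % m + (i : ℕ) / m * m = (i : ℕ) := Nat.mod_add_div' _ _
        have hj1 : (j : ℕ) % m + (j : ℕ) / m * m = (j : ℕ) := Nat.mod_add_div' _ _
        have him : (i : ℕ) % m < m := Nat.mod_lt _ hm
        have hjm : (j : ℕ) % m < m := Nat.mod_lt _ hm
        have hdiff : |((i : ℕ) : ℝ) - ((j : ℕ) : ℝ)| ≤ (m : ℝ) := by
          have e1 : ((i : ℕ) : ℝ) = ((i : ℕ) % m : ℕ) + ((i : ℕ) / m * m : ℕ) := by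
            exact_mod_cast (congrArg (Nat.cast : ℕ → ℝ) hi1).symm
          have e2 : ((j : ℕ) : ℝ) = ((j : ℕ) % m : ℕ) + ((j : ℕ) / m * m : ℕ) := by
            exact_mod_cast (congrArg (Nat.cast : ℕ → ℝ) hj1).symm
          have him' : (((i : ℕ) % m : ℕ) : ℝ) < (m : ℝ) := by exact_mod_cast him
          have hjm' : (((j : ℕ) % m : ℕ) : ℝ) < (m : ℝ) := by exact_mod_cast hjm
          have hin : (((i : ℕ) % m : ℕ) : ℝ) ≥ 0 := by positivity
          have hjn : (((j : ℕ) % m : ℕ) : ℝ) ≥ 0 := by positivity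
          have hq : (((i : ℕ) / m * m : ℕ) : ℝ) = (((j : ℕ) / m * m : ℕ) : ℝ) := by
            rw [hj']
          rw [abs_le]
          constructor <;> · rw [e1, e2]; push_cast at hq ⊢; linarith
        have heq : (((i : ℕ) : ℝ) + 1) / n - (((j : ℕ) : ℝ) + 1) / n
            = (((i : ℕ) : ℝ) - ((j : ℕ) : ℝ)) / n := by ring
        rw [heq, abs_div, abs_of_pos hn0]
        rw [div_le_div_iff₀ hn0 hD0]
        have hmn : (m : ℝ) * D = n := by exact_mod_cast hnm
        calc |((i : ℕ) : ℝ) - ((j : ℕ) : ℝ)| * D ≤ (m : ℝ) * D := by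
              apply mul_le_mul_of_nonneg_right hdiff (le_of_lt hD0)
          _ = n := hmn
          _ = 1 * n := by ring
      calc |f ((((i : ℕ) : ℝ) + 1) / n) - f ((((j : ℕ) : ℝ) + 1) / n)|
          ≤ L * |(((i : ℕ) : ℝ) + 1) / n - (((j : ℕ) : ℝ) + 1) / n| ^ α :=
            hf _ (hxmem i) _ (hxmem j)
        _ ≤ L * ((1 : ℝ) / D) ^ α := by
            apply mul_le_mul_of_nonneg_left _ (le_of_lt hL)
            exact Real.rpow_le_rpow (abs_nonneg _) hdist (le_of_lt hα0)
        _ = L * d := by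
            rw [hd, one_div, Real.inv_rpow (le_of_lt hD0), Real.rpow_neg (le_of_lt hD0)]
    have hsum : s i - sbar i = (∑ j ∈ B, (s i - s j)) / B.card := by
      rw [hsbar i]
      have : (∑ j ∈ B, (s i - s j)) = B.card * s i - ∑ j ∈ B, s j := by
        rw [Finset.sum_sub_distrib, Finset.sum_const, nsmul_eq_mul]
      rw [this]
      rw [← hB]
      field_simp
    rw [hsum, abs_div, abs_of_pos hcard]
    rw [div_le_iff₀ hcard]
    calc |∑ j ∈ B, (s i - s j)| ≤ ∑ j ∈ B, |s i - s j| := Finset.abs_sum_le_sum_abs _ _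
      _ ≤ ∑ _j ∈ B, (L * d) := Finset.sum_le_sum pair
      _ = B.card * (L * d) := by rw [Finset.sum_const, nsmul_eq_mul]
      _ = L * d * B.card := by ring
  have hdsq : d ^ 2 = (D : ℝ) ^ (-(2 * α)) := by
    rw [hd, ← Real.rpow_natCast ((D : ℝ) ^ (-α)) 2, ← Real.rpow_mul (le_of_lt hD0)]
    norm_num
    ring_nf
  calc ∑ i, (s i - sbar i) ^ 2 ≤ ∑ _i : Fin n, (L * d) ^ 2 := by
        apply Finset.sum_le_sum
        intro i _
        have h1 := key i
        nlinarith [abs_nonneg (s i - sbar i), sq_abs (s i - sbar i)]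
    _ = n * (L * d) ^ 2 := by rw [Finset.sum_const, nsmul_eq_mul, card_univ, Fintype.card_fin]
    _ = n * L ^ 2 * (D : ℝ) ^ (-(2 * α)) := by rw [← hdsq]; ring
end
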